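/- Under (H1)-(H3), for every u∈U, with u^δ=u*+δ(u-u*) for δ∈(0,1) and x^δ_γ the state corresponding to u^δ, the difference quotient converges to the variational process uniformly in γ: lim_{δ→0} sup_{γ∈Γ} E[Σ_{k=0}^N |(x^δ_γ(k)-x*_γ(k))/δ - x̄_γ(k)|²] = 0. -/

import Mathlib

open MeasureTheory ProbabilityTheory Filter Set
open scoped ENNReal NNReal RealInnerProductSpace BigOperators

noncomputable section

abbrev Vec (n : ℕ) : Type := EuclideanSpace ℝ (Fin n)

def noiseFiltration {Ω : Type} [MeasurableSpace Ω] {d : ℕ} (B : ℕ → Ω → Vec d) (k : ℕ) :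
    MeasurableSpace Ω :=
  ⨆ i ∈ Finset.Icc 1 k, MeasurableSpace.comap (B i) inferInstance

structure IsAdmissible {Ω : Type} [MeasurableSpace Ω] (P : Measure Ω) {d m : ℕ}
    (B : ℕ → Ω → Vec d) (N : ℕ) (q : ℝ) (U : ℕ → Set (Vec m)) (u : ℕ → Ω → Vec m) : Prop where
  adapted : ∀ k < N, Measurable[noiseFiltration B k] (u k)
  mem_constraint : ∀ k < N, ∀ ω, u k ω ∈ U k
  lq_bound : ∫⁻ ω, ∑ k ∈ Finset.range N, (‖u k ω‖₊ : ℝ≥0∞) ^ q ∂P < ∞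

def stateSol {Ω : Type} {n m d : ℕ} (b : ℕ → Vec n × Vec m → Vec n)
    (σ : ℕ → Vec n × Vec m → Fin d → Vec n) (B : ℕ → Ω → Vec d)
    (x0 : Vec n) (u : ℕ → Ω → Vec m) : ℕ → Ω → Vec n
  | 0 => fun _ => x0
  | (k+1) => fun ω =>
      b k (stateSol b σ B x0 u k ω, u k ω) +
        ∑ i, B (k+1) ω i • σ k (stateSol b σ B x0 u k ω, u k ω) i

/-- The solution of the first variational equation along `(x*,u*)` in direction `u - u*`. -/
def varSol {Ω : Type} {n m d : ℕ} (b : ℕ → Vec n × Vec m → Vec n)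
    (σ : ℕ → Vec n × Vec m → Fin d → Vec n) (B : ℕ → Ω → Vec d)
    (xs : ℕ → Ω → Vec n) (us u : ℕ → Ω → Vec m) : ℕ → Ω → Vec n
  | 0 => fun _ => 0
  | (k+1) => fun ω =>
      fderiv ℝ (b k) (xs k ω, us k ω) (varSol b σ B xs us u k ω, u k ω - us k ω) +
        ∑ i, B (k+1) ω i •
          fderiv ℝ (fun p => σ k p i) (xs k ω, us k ω)
            (varSol b σ B xs us u k ω, u k ω - us k ω)

structure H1 {n m d : ℕ} (N : ℕ) (L : ℝ) (b : ℕ → Vec n × Vec m → Vec n)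
    (σ : ℕ → Vec n × Vec m → Fin d → Vec n) : Prop where
  bound_zero : ∀ k < N, ‖b k (0, 0)‖ + ‖σ k (0, 0)‖ ≤ L
  smooth_b : ∀ k < N, ContDiff ℝ 1 (b k)
  smooth_sigma : ∀ k < N, ContDiff ℝ 1 (σ k)
  deriv_b : ∀ k < N, ∀ p, ‖fderiv ℝ (b k) p‖ ≤ L
  deriv_sigma : ∀ k < N, ∀ p, ‖fderiv ℝ (σ k) p‖ ≤ L

structure IsModulus (ψ : ℝ → ℝ) : Prop where
  continuous : Continuous ψ
  mono : Monotone ψ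
  subadd : ∀ s t : ℝ, 0 ≤ s → 0 ≤ t → ψ (s + t) ≤ ψ s + ψ t
  zero : ψ 0 = 0

/-- Assumption (H3) for the `(x,u)`-derivatives of `b` and `σ`, uniformly in `γ`. -/
def H3bσ {n m d : ℕ} {Γ : Type} (N : ℕ) (b : Γ → ℕ → Vec n × Vec m → Vec n)
    (σ : Γ → ℕ → Vec n × Vec m → Fin d → Vec n) : Prop :=
  ∃ ψ : ℝ → ℝ, IsModulus ψ ∧ ∀ γ : Γ, ∀ k < N, ∀ p p' : Vec n × Vec m,
    ‖fderiv ℝ (b γ k) p - fderiv ℝ (b γ k) p'‖ ≤ ψ (‖p.1 - p'.1‖ + ‖p.2 - p'.2‖) ∧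
    ‖fderiv ℝ (σ γ k) p - fderiv ℝ (σ γ k) p'‖ ≤ ψ (‖p.1 - p'.1‖ + ‖p.2 - p'.2‖)


set_option maxHeartbeats 1000000

namespace DQAux

variable {Ω : Type} {n m d : ℕ}

lemma lip_of_deriv {E F : Type*} [NormedAddCommGroup E] [NormedSpace ℝ E]
    [NormedAddCommGroup F] [NormedSpace ℝ F] {f : E → F} {L : ℝ}
    (hf : ContDiff ℝ 1 f) (hd : ∀ p, ‖fderiv ℝ f p‖ ≤ L) (p p' : E) :
    ‖f p - f p'‖ ≤ L * ‖p - p'‖ :=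
  Convex.norm_image_sub_le_of_norm_fderiv_le
    (fun x _ => (hf.differentiable one_ne_zero) x) (fun x _ => hd x) convex_univ trivial trivial

lemma fderiv_comp_proj {E : Type*} [NormedAddCommGroup E] [NormedSpace ℝ E]
    {σk : E → Fin d → Vec n} (hσ : ContDiff ℝ 1 σk) (i : Fin d) (p : E) :
    fderiv ℝ (fun p => σk p i) p =
      (ContinuousLinearMap.proj (R := ℝ) (φ := fun _ : Fin d => Vec n) i).comp (fderiv ℝ σk p) :=
  ((ContinuousLinearMap.proj (R := ℝ) (φ := fun _ : Fin d => Vec n) i).hasFDerivAt.comp p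
    ((hσ.differentiable one_ne_zero) p).hasFDerivAt).fderiv

lemma norm_comp_proj_le {E : Type*} [NormedAddCommGroup E] [NormedSpace ℝ E]
    (D : E →L[ℝ] (Fin d → Vec n)) (i : Fin d) :
    ‖(ContinuousLinearMap.proj (R := ℝ) (φ := fun _ : Fin d => Vec n) i).comp D‖ ≤ ‖D‖ := by
  refine ContinuousLinearMap.opNorm_le_bound _ (norm_nonneg D) fun v => ?_
  exact (norm_le_pi_norm (D v) i).trans (D.le_opNorm v)

lemma taylor_bound {E F : Type*} [NormedAddCommGroup E] [NormedSpace ℝ E]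
    [NormedAddCommGroup F] [NormedSpace ℝ F] {f : E → F} {C : ℝ}
    (hf : ContDiff ℝ 1 f)
    (p p' : E) (hC : ∀ z ∈ segment ℝ p' p, ‖fderiv ℝ f z - fderiv ℝ f p'‖ ≤ C) :
    ‖f p - f p' - fderiv ℝ f p' (p - p')‖ ≤ C * ‖p - p'‖ :=
  (convex_segment p' p).norm_image_sub_le_of_norm_fderiv_le'
    (fun x _ => (hf.differentiable one_ne_zero) x) hC
    (left_mem_segment ℝ p' p) (right_mem_segment ℝ p' p)

lemma segment_coord_bound {E F : Type*} [NormedAddCommGroup E] [NormedSpace ℝ E]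
    [NormedAddCommGroup F] [NormedSpace ℝ F] {p p' z : E × F}
    (hz : z ∈ segment ℝ p' p) :
    ‖z.1 - p'.1‖ ≤ ‖p.1 - p'.1‖ ∧ ‖z.2 - p'.2‖ ≤ ‖p.2 - p'.2‖ := by
  rw [segment_eq_image' ℝ p' p] at hz
  obtain ⟨θ, hθ, rfl⟩ := hz
  constructor
  · show ‖(p' + θ • (p - p')).1 - p'.1‖ ≤ _
    simp only [Prod.fst_add, Prod.smul_fst, Prod.fst_sub, add_sub_cancel_left]
    rw [norm_smul, Real.norm_eq_abs, abs_of_nonneg hθ.1]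
    exact mul_le_of_le_one_left (norm_nonneg _) hθ.2
  · show ‖(p' + θ • (p - p')).2 - p'.2‖ ≤ _
    simp only [Prod.snd_add, Prod.smul_snd, Prod.snd_sub, add_sub_cancel_left]
    rw [norm_smul, Real.norm_eq_abs, abs_of_nonneg hθ.1]
    exact mul_le_of_le_one_left (norm_nonneg _) hθ.2

lemma taylor_psi {E F : Type*} [NormedAddCommGroup E] [NormedSpace ℝ E]
    [NormedAddCommGroup F] [NormedSpace ℝ F]
    {f : E × F → Vec n} {L : ℝ} {ψ : ℝ → ℝ} (hmono : Monotone ψ)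
    (hf : ContDiff ℝ 1 f) (hd : ∀ p, ‖fderiv ℝ f p‖ ≤ L)
    (hψ : ∀ p p' : E × F, ‖fderiv ℝ f p - fderiv ℝ f p'‖ ≤ ψ (‖p.1 - p'.1‖ + ‖p.2 - p'.2‖))
    (p p' : E × F) :
    ‖f p - f p' - fderiv ℝ f p' (p - p')‖ ≤
      min (ψ (‖p.1 - p'.1‖ + ‖p.2 - p'.2‖)) (2 * L) * ‖p - p'‖ := by
  refine taylor_bound hf p p' fun z hz => ?_
  obtain ⟨hz1, hz2⟩ := segment_coord_bound hz
  refine le_min ((hψ z p').trans (hmono (add_le_add hz1 hz2))) ?_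
  calc ‖fderiv ℝ f z - fderiv ℝ f p'‖ ≤ ‖fderiv ℝ f z‖ + ‖fderiv ℝ f p'‖ := norm_sub_le _ _
    _ ≤ 2 * L := by have := hd z; have := hd p'; linarith

def AA (B : ℕ → Ω → Vec d) (k : ℕ) (ω : Ω) : ℝ := 1 + ∑ i, |B (k + 1) ω i|

def YY (L : ℝ) (B : ℕ → Ω → Vec d) (u us : ℕ → Ω → Vec m) : ℕ → Ω → ℝ
  | 0 => fun _ => 0
  | (k + 1) => fun ω => AA B k ω * (L + 1) * (YY L B u us k ω + ‖u k ω - us k ω‖)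

def QQ (L : ℝ) (B : ℕ → Ω → Vec d) : ℕ → Ω → ℝ
  | 0 => fun _ => 0
  | (k + 1) => fun ω => AA B k ω * (L + 1) * (QQ L B k ω + 1)

def SS (N : ℕ) (L : ℝ) (B : ℕ → Ω → Vec d) (u us : ℕ → Ω → Vec m) (ω : Ω) : ℝ :=
  ∑ k ∈ Finset.range N, (YY L B u us k ω + ‖u k ω - us k ω‖)

lemma one_le_AA (B : ℕ → Ω → Vec d) (k : ℕ) (ω : Ω) : 1 ≤ AA B k ω := by
  have : 0 ≤ ∑ i, |B (k + 1) ω i| := Finset.sum_nonneg fun i _ => abs_nonneg _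
  simp only [AA]; linarith

lemma YY_nonneg {L : ℝ} (hL : 0 < L) (B : ℕ → Ω → Vec d) (u us : ℕ → Ω → Vec m)
    (k : ℕ) (ω : Ω) : 0 ≤ YY L B u us k ω := by
  induction k with
  | zero => simp [YY]
  | succ k ih =>
      have h1 := one_le_AA B k ω
      have := norm_nonneg (u k ω - us k ω)
      show 0 ≤ AA B k ω * (L + 1) * (YY L B u us k ω + ‖u k ω - us k ω‖)
      positivity

lemma QQ_nonneg {L : ℝ} (hL : 0 < L) (B : ℕ → Ω → Vec d) (k : ℕ) (ω : Ω) :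
    0 ≤ QQ L B k ω := by
  induction k with
  | zero => simp [QQ]
  | succ k ih =>
      have h1 := one_le_AA B k ω
      show 0 ≤ AA B k ω * (L + 1) * (QQ L B k ω + 1)
      positivity

lemma SS_nonneg {N : ℕ} {L : ℝ} (hL : 0 < L) (B : ℕ → Ω → Vec d) (u us : ℕ → Ω → Vec m)
    (ω : Ω) : 0 ≤ SS N L B u us ω :=
  Finset.sum_nonneg fun k _ => add_nonneg (YY_nonneg hL B u us k ω) (norm_nonneg _)

lemma term_le_SS {N : ℕ} {L : ℝ} (hL : 0 < L) (B : ℕ → Ω → Vec d) (u us : ℕ → Ω → Vec m)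
    {k : ℕ} (hk : k < N) (ω : Ω) :
    YY L B u us k ω + ‖u k ω - us k ω‖ ≤ SS N L B u us ω :=
  Finset.single_le_sum (f := fun k => YY L B u us k ω + ‖u k ω - us k ω‖)
    (fun j _ => add_nonneg (YY_nonneg hL B u us j ω) (norm_nonneg _))
    (Finset.mem_range.2 hk)

lemma norm_add_sum_smul_le {c : Fin d → ℝ} {w : Vec n} {z : Fin d → Vec n} {M : ℝ}
    (hw : ‖w‖ ≤ M) (hz : ∀ i, ‖z i‖ ≤ M) :
    ‖w + ∑ i, c i • z i‖ ≤ (1 + ∑ i, |c i|) * M := by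
  have hM : 0 ≤ M := (norm_nonneg w).trans hw
  calc ‖w + ∑ i, c i • z i‖ ≤ ‖w‖ + ∑ i, ‖c i • z i‖ :=
        (norm_add_le _ _).trans (by gcongr; exact norm_sum_le _ _)
    _ ≤ M + ∑ i, |c i| * M := by
        refine add_le_add hw (Finset.sum_le_sum fun i _ => ?_)
        rw [norm_smul, Real.norm_eq_abs]
        exact mul_le_mul_of_nonneg_left (hz i) (abs_nonneg _)
    _ = (1 + ∑ i, |c i|) * M := by rw [add_mul, one_mul, ← Finset.sum_mul]

/-- The key deterministic (pathwise) estimate. -/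
lemma key_pointwise
    {N : ℕ} {L : ℝ} (hL : 0 < L) {ψ : ℝ → ℝ} (hmod : IsModulus ψ)
    {b : ℕ → Vec n × Vec m → Vec n} {σ : ℕ → Vec n × Vec m → Fin d → Vec n}
    (h1 : H1 N L b σ)
    (h3 : ∀ k < N, ∀ p p' : Vec n × Vec m,
      ‖fderiv ℝ (b k) p - fderiv ℝ (b k) p'‖ ≤ ψ (‖p.1 - p'.1‖ + ‖p.2 - p'.2‖) ∧
      ‖fderiv ℝ (σ k) p - fderiv ℝ (σ k) p'‖ ≤ ψ (‖p.1 - p'.1‖ + ‖p.2 - p'.2‖))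
    (B : ℕ → Ω → Vec d) (x0 : Vec n) (us u : ℕ → Ω → Vec m)
    {δ : ℝ} (hδ : 0 < δ) (ω : Ω) :
    ∀ k, k ≤ N →
      ‖δ⁻¹ • (stateSol b σ B x0 (fun k ω => us k ω + δ • (u k ω - us k ω)) k ω -
          stateSol b σ B x0 us k ω)‖ ≤ YY L B u us k ω ∧
      ‖varSol b σ B (stateSol b σ B x0 us) us u k ω‖ ≤ YY L B u us k ω ∧
      ‖δ⁻¹ • (stateSol b σ B x0 (fun k ω => us k ω + δ • (u k ω - us k ω)) k ω -
          stateSol b σ B x0 us k ω) -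
        varSol b σ B (stateSol b σ B x0 us) us u k ω‖ ≤
        min (ψ (δ * SS N L B u us ω)) (2 * L) * (SS N L B u us ω * QQ L B k ω) := by
  have hψ0 : ∀ t : ℝ, 0 ≤ t → 0 ≤ ψ t := fun t ht => hmod.zero ▸ hmod.mono ht
  intro k
  induction k with
  | zero =>
      intro _
      refine ⟨?_, ?_, ?_⟩
      · simp [stateSol, YY]
      · simp [varSol, YY]
      · simp [stateSol, varSol, QQ]
  | succ k ih =>
      intro hk1
      have hk : k < N := Nat.lt_of_succ_le hk1
      obtain ⟨hy, hv, he⟩ := ih (le_of_lt hk)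
      simp only [stateSol, varSol]
      set xδk := stateSol b σ B x0 (fun k ω => us k ω + δ • (u k ω - us k ω)) k ω with hxδk
      set xsk := stateSol b σ B x0 us k ω with hxsk
      set vk := varSol b σ B (stateSol b σ B x0 us) us u k ω with hvk
      set hatu := u k ω - us k ω with hhatu
      set y := δ⁻¹ • (xδk - xsk) with hydef
      set S := SS N L B u us ω with hSdef
      set Yk := YY L B u us k ω with hYk
      set Qk := QQ L B k ω with hQk
      set ψt := min (ψ (δ * S)) (2 * L) with hψt
      set pδ : Vec n × Vec m := (xδk, us k ω + δ • hatu) with hpδdef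
      set ps : Vec n × Vec m := (xsk, us k ω) with hpsdef
      have hYstep : YY L B u us (k+1) ω = AA B k ω * (L + 1) * (Yk + ‖hatu‖) := rfl
      have hQstep : QQ L B (k+1) ω = AA B k ω * (L + 1) * (Qk + 1) := rfl
      have husub : (us k ω + δ • hatu) - us k ω = δ • hatu := add_sub_cancel_left _ _
      have hxsub : xδk - xsk = δ • y := (smul_inv_smul₀ hδ.ne' _).symm
      have hpsub : pδ - ps = δ • ((y, hatu) : Vec n × Vec m) := by
        rw [hpδdef, hpsdef, Prod.mk_sub_mk, hxsub, husub, Prod.smul_mk]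
      have hp1 : pδ.1 - ps.1 = δ • y := hxsub
      have hp2 : pδ.2 - ps.2 = δ • hatu := husub
      clear_value xδk xsk vk hatu y S Yk Qk ψt pδ ps
      have hA1 : (1:ℝ) ≤ AA B k ω := one_le_AA B k ω
      have hSnn : 0 ≤ S := by rw [hSdef]; exact SS_nonneg hL B u us ω
      have hYnn : 0 ≤ Yk := by rw [hYk]; exact YY_nonneg hL B u us k ω
      have hQnn : 0 ≤ Qk := by rw [hQk]; exact QQ_nonneg hL B k ω
      have hWS : Yk + ‖hatu‖ ≤ S := by
        rw [hYk, hhatu, hSdef]; exact term_le_SS hL B u us hk ω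
      have hψtnn : 0 ≤ ψt := by
        rw [hψt]
        exact le_min (hψ0 _ (mul_nonneg hδ.le hSnn)) (by linarith)
      have hnormyu : ‖((y, hatu) : Vec n × Vec m)‖ ≤ Yk + ‖hatu‖ := by
        rw [Prod.norm_def]
        exact max_le (le_trans hy (le_add_of_nonneg_right (norm_nonneg _)))
          (le_add_of_nonneg_left hYnn)
      have hnormpsub : ‖pδ - ps‖ = δ * ‖((y, hatu) : Vec n × Vec m)‖ := by
        rw [hpsub, norm_smul, Real.norm_eq_abs, abs_of_pos hδ]
      -- Lipschitz-type bound for the difference quotients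
      have hLip : ∀ f : Vec n × Vec m → Vec n, ContDiff ℝ 1 f → (∀ p, ‖fderiv ℝ f p‖ ≤ L) →
          ‖δ⁻¹ • (f pδ - f ps)‖ ≤ L * (Yk + ‖hatu‖) := by
        intro f hf hd
        rw [norm_smul, Real.norm_eq_abs, abs_of_pos (inv_pos.2 hδ)]
        calc δ⁻¹ * ‖f pδ - f ps‖ ≤ δ⁻¹ * (L * ‖pδ - ps‖) := by
              have := lip_of_deriv hf hd pδ ps
              exact mul_le_mul_of_nonneg_left this (inv_pos.2 hδ).le
          _ = L * ‖((y, hatu) : Vec n × Vec m)‖ := by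
              rw [hnormpsub]
              field_simp
          _ ≤ L * (Yk + ‖hatu‖) := mul_le_mul_of_nonneg_left hnormyu hL.le
      -- error bound for the difference quotients versus the linearization
      have hM3 : ∀ f : Vec n × Vec m → Vec n, ContDiff ℝ 1 f → (∀ p, ‖fderiv ℝ f p‖ ≤ L) →
          (∀ p p' : Vec n × Vec m,
            ‖fderiv ℝ f p - fderiv ℝ f p'‖ ≤ ψ (‖p.1 - p'.1‖ + ‖p.2 - p'.2‖)) →
          ‖δ⁻¹ • (f pδ - f ps) - (fderiv ℝ f ps) (vk, hatu)‖ ≤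
            ψt * S + L * (ψt * (S * Qk)) := by
        intro f hf hd hfψ
        have hDsm : δ⁻¹ • (fderiv ℝ f ps) (pδ - ps) =
            (fderiv ℝ f ps) ((y, hatu) : Vec n × Vec m) := by
          rw [← _root_.map_smul, hpsub, inv_smul_smul₀ hδ.ne']
        have h0 : ((y - vk, (0:Vec m)) : Vec n × Vec m) =
            ((y, hatu) : Vec n × Vec m) - (vk, hatu) := by
          rw [Prod.mk_sub_mk, sub_self]
        have h0' : (fderiv ℝ f ps) ((y - vk, (0:Vec m)) : Vec n × Vec m) =
            (fderiv ℝ f ps) ((y, hatu) : Vec n × Vec m) - (fderiv ℝ f ps) (vk, hatu) := by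
          rw [h0, _root_.map_sub]
        have hsplit : δ⁻¹ • (f pδ - f ps) - (fderiv ℝ f ps) (vk, hatu) =
            δ⁻¹ • (f pδ - f ps - (fderiv ℝ f ps) (pδ - ps)) +
              (fderiv ℝ f ps) ((y - vk, (0:Vec m)) : Vec n × Vec m) := by
          rw [h0', smul_sub δ⁻¹ (f pδ - f ps) ((fderiv ℝ f ps) (pδ - ps)), hDsm]
          abel
        rw [hsplit]
        have harg : ‖pδ.1 - ps.1‖ + ‖pδ.2 - ps.2‖ ≤ δ * S := by
          rw [hp1, hp2, norm_smul, norm_smul, Real.norm_eq_abs, abs_of_pos hδ]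
          have hyS : ‖y‖ + ‖hatu‖ ≤ S := le_trans (add_le_add hy le_rfl) hWS
          calc δ * ‖y‖ + δ * ‖hatu‖ = δ * (‖y‖ + ‖hatu‖) := by ring
            _ ≤ δ * S := mul_le_mul_of_nonneg_left hyS hδ.le
        have hmin : min (ψ (‖pδ.1 - ps.1‖ + ‖pδ.2 - ps.2‖)) (2 * L) ≤ ψt := by
          rw [hψt]
          exact min_le_min (hmod.mono harg) le_rfl
        have hminnn : 0 ≤ min (ψ (‖pδ.1 - ps.1‖ + ‖pδ.2 - ps.2‖)) (2 * L) :=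
          le_min (hψ0 _ (by positivity)) (by linarith)
        have hrem : ‖δ⁻¹ • (f pδ - f ps - (fderiv ℝ f ps) (pδ - ps))‖ ≤ ψt * S := by
          rw [norm_smul, Real.norm_eq_abs, abs_of_pos (inv_pos.2 hδ)]
          calc δ⁻¹ * ‖f pδ - f ps - (fderiv ℝ f ps) (pδ - ps)‖
              ≤ δ⁻¹ * (min (ψ (‖pδ.1 - ps.1‖ + ‖pδ.2 - ps.2‖)) (2 * L) * ‖pδ - ps‖) :=
                mul_le_mul_of_nonneg_left (taylor_psi hmod.mono hf hd hfψ pδ ps)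
                  (inv_pos.2 hδ).le
            _ = min (ψ (‖pδ.1 - ps.1‖ + ‖pδ.2 - ps.2‖)) (2 * L) *
                  ‖((y, hatu) : Vec n × Vec m)‖ := by
                rw [hnormpsub]; field_simp
            _ ≤ ψt * S :=
                mul_le_mul hmin (le_trans hnormyu hWS) (norm_nonneg _) hψtnn
        have hDe : ‖(fderiv ℝ f ps) ((y - vk, (0:Vec m)) : Vec n × Vec m)‖ ≤
            L * (ψt * (S * Qk)) := by
          calc ‖(fderiv ℝ f ps) ((y - vk, (0:Vec m)) : Vec n × Vec m)‖
              ≤ ‖fderiv ℝ f ps‖ * ‖((y - vk, (0:Vec m)) : Vec n × Vec m)‖ :=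
                ContinuousLinearMap.le_opNorm _ _
            _ ≤ L * ‖y - vk‖ := by
                rw [Prod.norm_def, norm_zero]
                rw [max_eq_left (norm_nonneg _)]
                exact mul_le_mul (hd ps) le_rfl (norm_nonneg _) hL.le
            _ ≤ L * (ψt * (S * Qk)) := mul_le_mul_of_nonneg_left he hL.le
        exact le_trans (norm_add_le _ _) (add_le_add hrem hDe)
      -- component facts for σ
      have hσc : ∀ i : Fin d, ContDiff ℝ 1 (fun p => σ k p i) :=
        fun i => contDiff_pi.1 (h1.smooth_sigma k hk) i
      have hσd : ∀ i : Fin d, ∀ z, ‖fderiv ℝ (fun p => σ k p i) z‖ ≤ L := by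
        intro i z
        rw [fderiv_comp_proj (h1.smooth_sigma k hk) i z]
        exact (norm_comp_proj_le _ _).trans (h1.deriv_sigma k hk z)
      have hσψ : ∀ i : Fin d, ∀ p p' : Vec n × Vec m,
          ‖fderiv ℝ (fun p => σ k p i) p - fderiv ℝ (fun p => σ k p i) p'‖ ≤
            ψ (‖p.1 - p'.1‖ + ‖p.2 - p'.2‖) := by
        intro i p p'
        rw [fderiv_comp_proj (h1.smooth_sigma k hk) i p,
          fderiv_comp_proj (h1.smooth_sigma k hk) i p',
          ← ContinuousLinearMap.comp_sub]
        exact (norm_comp_proj_le _ _).trans (h3 k hk p p').2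
      have hAA : (1 + ∑ i, |B (k + 1) ω i|) = AA B k ω := rfl
      refine ⟨?_, ?_, ?_⟩
      · -- difference quotient bound
        have hrw1 : δ⁻¹ • ((b k pδ + ∑ i, B (k+1) ω i • σ k pδ i) -
              (b k ps + ∑ i, B (k+1) ω i • σ k ps i)) =
            δ⁻¹ • (b k pδ - b k ps) +
              ∑ i, B (k+1) ω i • (δ⁻¹ • (σ k pδ i - σ k ps i)) := by
          rw [add_sub_add_comm, smul_add]
          congr 1
          rw [← Finset.sum_sub_distrib, Finset.smul_sum]
          exact Finset.sum_congr rfl fun i _ => by rw [← smul_sub, smul_comm]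
        rw [hrw1, hYstep]
        have hw := hLip (b k) (h1.smooth_b k hk) (h1.deriv_b k hk)
        have hz : ∀ i, ‖δ⁻¹ • (σ k pδ i - σ k ps i)‖ ≤ L * (Yk + ‖hatu‖) :=
          fun i => hLip (fun p => σ k p i) (hσc i) (hσd i)
        have hsum := norm_add_sum_smul_le (c := fun i => B (k+1) ω i) hw hz
        refine le_trans hsum ?_
        rw [hAA]
        have h1' : 0 ≤ Yk + ‖hatu‖ := add_nonneg hYnn (norm_nonneg _)
        nlinarith [mul_nonneg (sub_nonneg.2 hA1) h1']
      · -- variational process bound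
        rw [hYstep]
        have hnvu : ‖((vk, hatu) : Vec n × Vec m)‖ ≤ Yk + ‖hatu‖ := by
          rw [Prod.norm_def]
          exact max_le (le_trans hv (le_add_of_nonneg_right (norm_nonneg _)))
            (le_add_of_nonneg_left hYnn)
        have hw : ‖(fderiv ℝ (b k) ps) (vk, hatu)‖ ≤ L * (Yk + ‖hatu‖) :=
          le_trans (ContinuousLinearMap.le_opNorm _ _)
            (mul_le_mul (h1.deriv_b k hk ps) hnvu (norm_nonneg _) hL.le)
        have hz : ∀ i, ‖(fderiv ℝ (fun p => σ k p i) ps) (vk, hatu)‖ ≤ L * (Yk + ‖hatu‖) :=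
          fun i => le_trans (ContinuousLinearMap.le_opNorm _ _)
            (mul_le_mul (hσd i ps) hnvu (norm_nonneg _) hL.le)
        have hsum := norm_add_sum_smul_le (c := fun i => B (k+1) ω i) hw hz
        refine le_trans hsum ?_
        rw [hAA]
        have h1' : 0 ≤ Yk + ‖hatu‖ := add_nonneg hYnn (norm_nonneg _)
        nlinarith [mul_nonneg (sub_nonneg.2 hA1) h1']
      · -- error bound
        have hrw1 : δ⁻¹ • ((b k pδ + ∑ i, B (k+1) ω i • σ k pδ i) -
              (b k ps + ∑ i, B (k+1) ω i • σ k ps i)) =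
            δ⁻¹ • (b k pδ - b k ps) +
              ∑ i, B (k+1) ω i • (δ⁻¹ • (σ k pδ i - σ k ps i)) := by
          rw [add_sub_add_comm, smul_add]
          congr 1
          rw [← Finset.sum_sub_distrib, Finset.smul_sum]
          exact Finset.sum_congr rfl fun i _ => by rw [← smul_sub, smul_comm]
        rw [hrw1]
        have hrw3 : δ⁻¹ • (b k pδ - b k ps) +
              (∑ i, B (k+1) ω i • (δ⁻¹ • (σ k pδ i - σ k ps i))) -
              ((fderiv ℝ (b k) ps) (vk, hatu) +
                ∑ i, B (k+1) ω i • (fderiv ℝ (fun p => σ k p i) ps) (vk, hatu)) =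
            (δ⁻¹ • (b k pδ - b k ps) - (fderiv ℝ (b k) ps) (vk, hatu)) +
              ∑ i, B (k+1) ω i • (δ⁻¹ • (σ k pδ i - σ k ps i) -
                (fderiv ℝ (fun p => σ k p i) ps) (vk, hatu)) := by
          rw [add_sub_add_comm, ← Finset.sum_sub_distrib]
          congr 1
          exact Finset.sum_congr rfl fun i _ => by rw [← smul_sub]
        rw [hrw3, hQstep]
        have hw := hM3 (b k) (h1.smooth_b k hk) (h1.deriv_b k hk) fun p p' => (h3 k hk p p').1
        have hz : ∀ i, ‖δ⁻¹ • (σ k pδ i - σ k ps i) -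
            (fderiv ℝ (fun p => σ k p i) ps) (vk, hatu)‖ ≤ ψt * S + L * (ψt * (S * Qk)) :=
          fun i => hM3 (fun p => σ k p i) (hσc i) (hσd i) (hσψ i)
        have hsum := norm_add_sum_smul_le (c := fun i => B (k+1) ω i) hw hz
        refine le_trans hsum ?_
        rw [hAA]
        nlinarith [mul_nonneg hψtnn hSnn, mul_nonneg (mul_nonneg hψtnn hSnn) hQnn,
          mul_nonneg (mul_nonneg (mul_nonneg hψtnn hSnn) hQnn) (sub_nonneg.2 hA1),
          mul_nonneg (mul_nonneg hψtnn hSnn) (sub_nonneg.2 hA1), hL.le]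



lemma addpow (x y : ℝ≥0∞) {c : ℝ} (hc : 0 ≤ c) :
    (x + y) ^ c ≤ 2 ^ c * (x ^ c + y ^ c) := by
  have hxy : x + y ≤ 2 * (x ⊔ y) := by
    rcases le_total x y with h | h
    · calc x + y ≤ y + y := by gcongr
        _ = 2 * y := (two_mul y).symm
        _ ≤ 2 * (x ⊔ y) := by gcongr; exact le_max_right _ _
    · calc x + y ≤ x + x := by gcongr
        _ = 2 * x := (two_mul x).symm
        _ ≤ 2 * (x ⊔ y) := by gcongr; exact le_max_left _ _
  calc (x + y) ^ c ≤ (2 * (x ⊔ y)) ^ c := ENNReal.rpow_le_rpow hxy hc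
    _ = 2 ^ c * (x ⊔ y) ^ c := ENNReal.mul_rpow_of_nonneg _ _ hc
    _ ≤ 2 ^ c * (x ^ c + y ^ c) := by
        gcongr
        rcases le_total x y with h | h
        · rw [sup_eq_right.2 h]; exact le_add_self
        · rw [sup_eq_left.2 h]; exact le_add_right le_rfl

lemma sum_rpow_le {ι : Type*} (s : Finset ι) (x : ι → ℝ≥0∞) {c : ℝ} (hc : 0 < c) :
    (∑ j ∈ s, x j) ^ c ≤ (s.card : ℝ≥0∞) ^ c * ∑ j ∈ s, x j ^ c := by
  have hstep : ∀ j ∈ s, x j ≤ (∑ i ∈ s, x i ^ c) ^ (1 / c) := by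
    intro j hj
    have h1 : x j ^ c ≤ ∑ i ∈ s, x i ^ c := Finset.single_le_sum (f := fun i => x i ^ c) (fun i _ => zero_le) hj
    have h2 : (x j ^ c) ^ (1 / c) ≤ (∑ i ∈ s, x i ^ c) ^ (1 / c) :=
      ENNReal.rpow_le_rpow h1 (by positivity)
    rwa [← ENNReal.rpow_mul, mul_one_div, div_self hc.ne', ENNReal.rpow_one] at h2
  calc (∑ j ∈ s, x j) ^ c ≤ ((s.card : ℝ≥0∞) * (∑ i ∈ s, x i ^ c) ^ (1 / c)) ^ c := by
        refine ENNReal.rpow_le_rpow ?_ hc.le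
        calc ∑ j ∈ s, x j ≤ ∑ _j ∈ s, (∑ i ∈ s, x i ^ c) ^ (1 / c) :=
              Finset.sum_le_sum hstep
          _ = (s.card : ℝ≥0∞) * (∑ i ∈ s, x i ^ c) ^ (1 / c) := by
              rw [Finset.sum_const, nsmul_eq_mul]
    _ = (s.card : ℝ≥0∞) ^ c * ∑ i ∈ s, x i ^ c := by
        rw [ENNReal.mul_rpow_of_nonneg _ _ hc.le, ← ENNReal.rpow_mul,
          one_div, inv_mul_cancel₀ hc.ne', ENNReal.rpow_one]

lemma prod_le_sum_pow {ι : Type*} (s : Finset ι) (f : ι → ℝ≥0∞) (hs : s.Nonempty)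
    (_hf : ∀ l ∈ s, 1 ≤ f l) :
    ∏ l ∈ s, f l ≤ ∑ l ∈ s, f l ^ s.card := by
  have hsup : ∏ l ∈ s, f l ≤ (s.sup f) ^ s.card :=
    Finset.prod_le_pow_card s f _ fun i hi => Finset.le_sup hi
  obtain ⟨i0, hi0, hsup_eq⟩ := Finset.exists_mem_eq_sup s hs f
  calc ∏ l ∈ s, f l ≤ (s.sup f) ^ s.card := hsup
    _ = f i0 ^ s.card := by rw [hsup_eq]
    _ ≤ ∑ l ∈ s, f l ^ s.card := Finset.single_le_sum (f := fun l => f l ^ s.card) (fun i _ => zero_le) hi0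

lemma prod_rpow (s : Finset ℕ) (f : ℕ → ℝ≥0∞) {c : ℝ} (hc : 0 ≤ c) :
    (∏ l ∈ s, f l) ^ c = ∏ l ∈ s, (f l) ^ c := by
  induction s using Finset.induction with
  | empty => simp [ENNReal.one_rpow]
  | @insert a s hnot ih =>
      rw [Finset.prod_insert hnot, Finset.prod_insert hnot,
        ENNReal.mul_rpow_of_nonneg _ _ hc, ih]


/-- Total control increment. -/
def TT (N : ℕ) (u us : ℕ → Ω → Vec m) (ω : Ω) : ℝ :=
  ∑ k ∈ Finset.range N, ‖u k ω - us k ω‖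

/-- Pure noise polynomial dominating `QQ`. -/
def CC (N : ℕ) (L : ℝ) (B : ℕ → Ω → Vec d) (ω : Ω) : ℝ :=
  ∏ l ∈ Finset.range N, ((L + 1) * (AA B l ω + 1))

lemma TT_nonneg (N : ℕ) (u us : ℕ → Ω → Vec m) (ω : Ω) : 0 ≤ TT N u us ω :=
  Finset.sum_nonneg fun _ _ => norm_nonneg _

lemma one_le_CCk {L : ℝ} (hL : 0 < L) (B : ℕ → Ω → Vec d) (k : ℕ) (ω : Ω) :
    1 ≤ ∏ l ∈ Finset.range k, ((L + 1) * (AA B l ω + 1)) := by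
  induction k with
  | zero => simp
  | succ k ih =>
      rw [Finset.prod_range_succ]
      have hf : 1 ≤ (L + 1) * (AA B k ω + 1) := by nlinarith [one_le_AA B k ω]
      calc (1:ℝ) = 1 * 1 := by ring
        _ ≤ _ := mul_le_mul ih hf zero_le_one (le_trans zero_le_one ih)

lemma CCk_mono {L : ℝ} (hL : 0 < L) (B : ℕ → Ω → Vec d) (ω : Ω) :
    ∀ k N', k ≤ N' → ∏ l ∈ Finset.range k, ((L + 1) * (AA B l ω + 1)) ≤
      ∏ l ∈ Finset.range N', ((L + 1) * (AA B l ω + 1)) := by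
  intro k N' hkN
  induction N' with
  | zero => simp_all
  | succ N' ih =>
      rcases Nat.lt_or_ge k (N' + 1) with h | h
      · have h2 := ih (Nat.lt_succ_iff.1 h)
        rw [Finset.prod_range_succ]
        have hf : 1 ≤ (L + 1) * (AA B N' ω + 1) := by nlinarith [one_le_AA B N' ω]
        have hPnn : (0:ℝ) ≤ ∏ l ∈ Finset.range N', ((L + 1) * (AA B l ω + 1)) :=
          le_trans zero_le_one (one_le_CCk hL B N' ω)
        exact h2.trans (le_mul_of_one_le_right hPnn hf)
      · have : k = N' + 1 := le_antisymm hkN h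
        rw [this]

lemma one_le_CC {N : ℕ} {L : ℝ} (hL : 0 < L) (B : ℕ → Ω → Vec d) (ω : Ω) :
    1 ≤ CC N L B ω := one_le_CCk hL B N ω

lemma QQ_le_CC {N : ℕ} {L : ℝ} (hL : 0 < L) (B : ℕ → Ω → Vec d) (ω : Ω) :
    ∀ k, k ≤ N → QQ L B k ω ≤ CC N L B ω - 1 := by
  have hstep : ∀ k, QQ L B k ω ≤ ∏ l ∈ Finset.range k, ((L + 1) * (AA B l ω + 1)) - 1 := by
    intro k
    induction k with
    | zero => simp [QQ]
    | succ k ih =>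
        have hA := one_le_AA B k ω
        have hP := one_le_CCk hL B k ω
        show AA B k ω * (L + 1) * (QQ L B k ω + 1) ≤ _
        rw [Finset.prod_range_succ]
        have h2 : AA B k ω * (L + 1) * (QQ L B k ω + 1) ≤
            AA B k ω * (L + 1) * (∏ l ∈ Finset.range k, ((L + 1) * (AA B l ω + 1))) := by
          have := QQ_nonneg hL B k ω
          have h3 : QQ L B k ω + 1 ≤ ∏ l ∈ Finset.range k, ((L + 1) * (AA B l ω + 1)) := by
            linarith
          have h4 : 0 ≤ AA B k ω * (L + 1) := by nlinarith
          exact mul_le_mul_of_nonneg_left h3 h4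
        refine h2.trans ?_
        nlinarith [one_le_CCk hL B k ω]
  intro k hk
  refine (hstep k).trans ?_
  have := CCk_mono hL B ω k N hk
  simp only [CC]
  linarith

lemma YY_le_QQ_TT {N : ℕ} {L : ℝ} (hL : 0 < L) (B : ℕ → Ω → Vec d)
    (u us : ℕ → Ω → Vec m) (ω : Ω) :
    ∀ k, k ≤ N → YY L B u us k ω ≤ QQ L B k ω * TT N u us ω := by
  intro k
  induction k with
  | zero => intro _; simp [YY, QQ]
  | succ k ih =>
      intro hk1
      have hk : k < N := Nat.lt_of_succ_le hk1
      have hT : ‖u k ω - us k ω‖ ≤ TT N u us ω :=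
        Finset.single_le_sum (f := fun j => ‖u j ω - us j ω‖)
          (fun j _ => norm_nonneg _) (Finset.mem_range.2 hk)
      have hTnn := TT_nonneg N u us ω
      have hA := one_le_AA B k ω
      have hQnn := QQ_nonneg hL B k ω
      have hY := ih (le_of_lt hk)
      show AA B k ω * (L + 1) * (YY L B u us k ω + ‖u k ω - us k ω‖) ≤
        AA B k ω * (L + 1) * (QQ L B k ω + 1) * TT N u us ω
      have h3 : YY L B u us k ω + ‖u k ω - us k ω‖ ≤ (QQ L B k ω + 1) * TT N u us ω := by
        rw [add_mul, one_mul]; exact add_le_add hY hT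
      calc AA B k ω * (L + 1) * (YY L B u us k ω + ‖u k ω - us k ω‖)
          ≤ AA B k ω * (L + 1) * ((QQ L B k ω + 1) * TT N u us ω) := by
            have h4 : 0 ≤ AA B k ω * (L + 1) := by nlinarith
            exact mul_le_mul_of_nonneg_left h3 h4
        _ = AA B k ω * (L + 1) * (QQ L B k ω + 1) * TT N u us ω := by ring

lemma SS_le {N : ℕ} {L : ℝ} (hL : 0 < L) (B : ℕ → Ω → Vec d)
    (u us : ℕ → Ω → Vec m) (ω : Ω) :
    SS N L B u us ω ≤ (1 + ∑ j ∈ Finset.range N, QQ L B j ω) * TT N u us ω := by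
  have h : SS N L B u us ω ≤
      ∑ k ∈ Finset.range N, (QQ L B k ω * TT N u us ω + ‖u k ω - us k ω‖) := by
    refine Finset.sum_le_sum fun k hk => ?_
    exact add_le_add
      (YY_le_QQ_TT hL B u us ω k (le_of_lt (Finset.mem_range.1 hk))) le_rfl
  refine h.trans ?_
  rw [Finset.sum_add_distrib, ← Finset.sum_mul]
  have : ∑ k ∈ Finset.range N, ‖u k ω - us k ω‖ = TT N u us ω := rfl
  rw [this, add_mul, one_mul, add_comm]

-- measurability
lemma meas_AA [MeasurableSpace Ω] {B : ℕ → Ω → Vec d} (hB : ∀ k, Measurable (B k))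
    (k : ℕ) : Measurable (AA B k) := by
  unfold AA
  exact measurable_const.add <| Finset.measurable_sum _ fun i _ =>
    ((measurable_pi_apply i).comp ((PiLp.continuous_ofLp 2 _).measurable.comp (hB (k + 1)))).abs

lemma meas_YY [MeasurableSpace Ω] {L : ℝ} {B : ℕ → Ω → Vec d} {u us : ℕ → Ω → Vec m}
    {N : ℕ} (hB : ∀ k, Measurable (B k)) (hu : ∀ k < N, Measurable (u k))
    (hus : ∀ k < N, Measurable (us k)) :
    ∀ k, k ≤ N → Measurable (fun ω => YY L B u us k ω) := by
  intro k
  induction k with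
  | zero => intro _; simp only [YY]; exact measurable_const
  | succ k ih =>
      intro hk1
      have hk : k < N := Nat.lt_of_succ_le hk1
      show Measurable fun ω => AA B k ω * (L + 1) * (YY L B u us k ω + ‖u k ω - us k ω‖)
      exact (((meas_AA hB k).mul measurable_const).mul
        ((ih (le_of_lt hk)).add (((hu k hk).sub (hus k hk)).norm)))

lemma meas_QQ [MeasurableSpace Ω] {L : ℝ} {B : ℕ → Ω → Vec d}
    (hB : ∀ k, Measurable (B k)) :
    ∀ k, Measurable (fun ω => QQ L B k ω) := by
  intro k
  induction k with
  | zero => simp only [QQ]; exact measurable_const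
  | succ k ih =>
      show Measurable fun ω => AA B k ω * (L + 1) * (QQ L B k ω + 1)
      exact ((meas_AA hB k).mul measurable_const).mul (ih.add measurable_const)

lemma meas_SS [MeasurableSpace Ω] {N : ℕ} {L : ℝ} {B : ℕ → Ω → Vec d}
    {u us : ℕ → Ω → Vec m}
    (hB : ∀ k, Measurable (B k)) (hu : ∀ k < N, Measurable (u k))
    (hus : ∀ k < N, Measurable (us k)) : Measurable (SS N L B u us) := by
  unfold SS
  refine Finset.measurable_sum _ fun k hk => ?_
  have hk' : k < N := Finset.mem_range.1 hk
  exact (meas_YY hB hu hus k (le_of_lt hk')).add (((hu k hk').sub (hus k hk')).norm)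

lemma meas_TT [MeasurableSpace Ω] {N : ℕ} {u us : ℕ → Ω → Vec m}
    (hu : ∀ k < N, Measurable (u k)) (hus : ∀ k < N, Measurable (us k)) :
    Measurable (TT N u us) := by
  unfold TT
  refine Finset.measurable_sum _ fun k hk => ?_
  have hk' : k < N := Finset.mem_range.1 hk
  exact ((hu k hk').sub (hus k hk')).norm

lemma meas_CC [MeasurableSpace Ω] {N : ℕ} {L : ℝ} {B : ℕ → Ω → Vec d}
    (hB : ∀ k, Measurable (B k)) : Measurable (CC N L B) := by
  unfold CC
  exact Finset.measurable_prod _ fun l _ =>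
    measurable_const.mul ((meas_AA hB l).add measurable_const)

lemma abs_coord_le_norm (x : Vec d) (i : Fin d) : |x i| ≤ ‖x‖ := by
  rw [EuclideanSpace.norm_eq]
  have h1 : |x i| = Real.sqrt (‖x i‖ ^ 2) := by rw [Real.sqrt_sq_eq_abs]; simp
  rw [h1]
  exact Real.sqrt_le_sqrt <| Finset.single_le_sum (f := fun j => ‖x j‖ ^ 2)
    (fun j _ => by positivity) (Finset.mem_univ i)

/-- Polynomial (in the noise) factor dominating the error. -/
def PhiR (N : ℕ) (L : ℝ) (B : ℕ → Ω → Vec d) (ω : Ω) : ℝ :=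
  (1 + ∑ j ∈ Finset.range N, QQ L B j ω) ^ 2 * ∑ k ∈ Finset.range (N + 1), QQ L B k ω ^ 2

lemma PhiR_nonneg {N : ℕ} {L : ℝ} (B : ℕ → Ω → Vec d) (ω : Ω) : 0 ≤ PhiR N L B ω :=
  mul_nonneg (sq_nonneg _) (Finset.sum_nonneg fun _ _ => sq_nonneg _)

lemma meas_PhiR [MeasurableSpace Ω] {N : ℕ} {L : ℝ} {B : ℕ → Ω → Vec d}
    (hB : ∀ k, Measurable (B k)) : Measurable (PhiR N L B) := by
  unfold PhiR
  exact ((measurable_const.add (Finset.measurable_sum _ fun j _ => meas_QQ hB j)).pow_const 2).mul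
    (Finset.measurable_sum _ fun k _ => (meas_QQ hB k).pow_const 2)

lemma PhiR_le {N : ℕ} {L : ℝ} (hL : 0 < L) (B : ℕ → Ω → Vec d) (ω : Ω) :
    PhiR N L B ω ≤ ((N : ℝ) + 1) ^ 3 * CC N L B ω ^ 4 := by
  have hC1 := one_le_CC hL B (N := N) ω
  have hQle : ∀ k ≤ N, QQ L B k ω ≤ CC N L B ω := fun k hk => by
    have := QQ_le_CC hL B ω k hk; linarith
  have h1 : 1 + ∑ j ∈ Finset.range N, QQ L B j ω ≤ ((N : ℝ) + 1) * CC N L B ω := by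
    have hsum : ∑ j ∈ Finset.range N, QQ L B j ω ≤ (N : ℝ) * CC N L B ω := by
      calc ∑ j ∈ Finset.range N, QQ L B j ω ≤ ∑ _j ∈ Finset.range N, CC N L B ω :=
            Finset.sum_le_sum fun j hj => hQle j (le_of_lt (Finset.mem_range.1 hj))
        _ = (N : ℝ) * CC N L B ω := by rw [Finset.sum_const, Finset.card_range, nsmul_eq_mul]
    nlinarith
  have h2 : ∑ k ∈ Finset.range (N + 1), QQ L B k ω ^ 2 ≤ ((N : ℝ) + 1) * CC N L B ω ^ 2 := by
    calc ∑ k ∈ Finset.range (N + 1), QQ L B k ω ^ 2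
        ≤ ∑ _k ∈ Finset.range (N + 1), CC N L B ω ^ 2 := by
          refine Finset.sum_le_sum fun k hk => ?_
          have hk' : k ≤ N := Nat.lt_succ_iff.1 (Finset.mem_range.1 hk)
          exact pow_le_pow_left₀ (QQ_nonneg hL B k ω) (hQle k hk') 2
      _ = ((N : ℝ) + 1) * CC N L B ω ^ 2 := by
          rw [Finset.sum_const, Finset.card_range, nsmul_eq_mul]; push_cast; ring
  have h1nn : (0:ℝ) ≤ 1 + ∑ j ∈ Finset.range N, QQ L B j ω := by
    have : 0 ≤ ∑ j ∈ Finset.range N, QQ L B j ω :=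
      Finset.sum_nonneg fun j _ => QQ_nonneg hL B j ω
    linarith
  calc PhiR N L B ω ≤ (((N : ℝ) + 1) * CC N L B ω) ^ 2 * (((N : ℝ) + 1) * CC N L B ω ^ 2) :=
        mul_le_mul (pow_le_pow_left₀ h1nn h1 2) h2
          (Finset.sum_nonneg fun _ _ => sq_nonneg _) (by positivity)
    _ = ((N : ℝ) + 1) ^ 3 * CC N L B ω ^ 4 := by ring

lemma CC_moment [MeasurableSpace Ω] (P : MeasureTheory.Measure Ω)
    [MeasureTheory.IsProbabilityMeasure P]
    {N : ℕ} (hN : 0 < N) {L : ℝ} (hL : 0 < L) {B : ℕ → Ω → Vec d}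
    (hB : ∀ k, Measurable (B k))
    (hBmom : ∀ k, 1 ≤ k → k ≤ N → ∀ r : ℝ, 2 ≤ r → ∫⁻ ω, (‖B k ω‖₊ : ℝ≥0∞) ^ r ∂P < ∞)
    {r : ℝ} (hr : 2 ≤ r) :
    ∫⁻ ω, ENNReal.ofReal (CC N L B ω) ^ r ∂P < ∞ := by
  have hr0 : (0:ℝ) ≤ r := by linarith
  set c : ℝ := r * N with hc
  have hc2 : 2 ≤ c := by
    have h1 : (1:ℝ) ≤ N := by exact_mod_cast hN
    nlinarith
  have hc0 : (0:ℝ) ≤ c := by linarith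
  have hfac1 : ∀ l (ω : Ω), (1:ℝ) ≤ (L + 1) * (AA B l ω + 1) := fun l ω => by
    nlinarith [one_le_AA B l ω]
  have hpt : ∀ ω, ENNReal.ofReal (CC N L B ω) ^ r ≤
      ∑ l ∈ Finset.range N, ENNReal.ofReal ((L + 1) * (AA B l ω + 1)) ^ c := by
    intro ω
    have h1 : ENNReal.ofReal (CC N L B ω) =
        ∏ l ∈ Finset.range N, ENNReal.ofReal ((L + 1) * (AA B l ω + 1)) :=
      ENNReal.ofReal_prod_of_nonneg fun l _ => le_trans zero_le_one (hfac1 l ω)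
    rw [h1, prod_rpow _ _ hr0]
    refine le_trans (prod_le_sum_pow _ _ ⟨0, Finset.mem_range.2 hN⟩ fun l _ => ?_) ?_
    · calc (1:ℝ≥0∞) = 1 ^ r := (ENNReal.one_rpow r).symm
        _ ≤ _ := ENNReal.rpow_le_rpow (ENNReal.one_le_ofReal.2 (hfac1 l ω)) hr0
    · refine Finset.sum_le_sum fun l _ => ?_
      rw [Finset.card_range, ← ENNReal.rpow_natCast (_ ^ r) N, ← ENNReal.rpow_mul]
  have hmeasAA : ∀ l, Measurable fun ω => ENNReal.ofReal ((L + 1) * (AA B l ω + 1)) :=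
    fun l => ENNReal.measurable_ofReal.comp
      (measurable_const.mul ((meas_AA hB l).add measurable_const))
  have hterm : ∀ l, l < N → ∫⁻ ω, ENNReal.ofReal ((L + 1) * (AA B l ω + 1)) ^ c ∂P < ⊤ := by
    intro l hl
    have h2top : (2:ℝ≥0∞) ^ c ≠ ⊤ := (ENNReal.rpow_lt_top_of_nonneg hc0 (by norm_num)).ne
    have hptw : ∀ ω, ENNReal.ofReal ((L + 1) * (AA B l ω + 1)) ^ c ≤
        ENNReal.ofReal ((L + 1) * (2 + d)) ^ c *
          (2 ^ c * (1 + (‖B (l + 1) ω‖₊ : ℝ≥0∞) ^ c)) := by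
      intro ω
      have hb0 : (0:ℝ) ≤ ‖B (l + 1) ω‖ := norm_nonneg _
      have hsum : ∑ i, |B (l + 1) ω i| ≤ (d : ℝ) * ‖B (l + 1) ω‖ := by
        calc ∑ i, |B (l + 1) ω i| ≤ ∑ _i : Fin d, ‖B (l + 1) ω‖ :=
              Finset.sum_le_sum fun i _ => abs_coord_le_norm _ i
          _ = (d : ℝ) * ‖B (l + 1) ω‖ := by
              rw [Finset.sum_const, Finset.card_univ, Fintype.card_fin, nsmul_eq_mul]
      have hAAle : (L + 1) * (AA B l ω + 1) ≤
          ((L + 1) * (2 + d)) * (1 + ‖B (l + 1) ω‖) := by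
        simp only [AA]
        have hd0 : (0:ℝ) ≤ (d:ℝ) := Nat.cast_nonneg d
        nlinarith
      have hinner : ENNReal.ofReal (1 + ‖B (l + 1) ω‖) ^ c ≤
          2 ^ c * (1 + (‖B (l + 1) ω‖₊ : ℝ≥0∞) ^ c) := by
        have he : ENNReal.ofReal (1 + ‖B (l + 1) ω‖) = 1 + (‖B (l + 1) ω‖₊ : ℝ≥0∞) := by
          rw [ENNReal.ofReal_add zero_le_one hb0, ENNReal.ofReal_one,
            ofReal_norm, enorm_eq_nnnorm]
        rw [he]
        refine le_trans (addpow _ _ hc0) ?_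
        rw [ENNReal.one_rpow]
      calc ENNReal.ofReal ((L + 1) * (AA B l ω + 1)) ^ c
          ≤ ENNReal.ofReal (((L + 1) * (2 + d)) * (1 + ‖B (l + 1) ω‖)) ^ c :=
            ENNReal.rpow_le_rpow (ENNReal.ofReal_le_ofReal hAAle) hc0
        _ = ENNReal.ofReal ((L + 1) * (2 + d)) ^ c *
              ENNReal.ofReal (1 + ‖B (l + 1) ω‖) ^ c := by
            rw [ENNReal.ofReal_mul (by positivity), ENNReal.mul_rpow_of_nonneg _ _ hc0]
        _ ≤ _ := mul_le_mul_right hinner _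
    have hBm := hBmom (l + 1) (Nat.le_add_left 1 l) (Nat.succ_le_of_lt hl) c hc2
    calc ∫⁻ ω, ENNReal.ofReal ((L + 1) * (AA B l ω + 1)) ^ c ∂P
        ≤ ∫⁻ ω, ENNReal.ofReal ((L + 1) * (2 + d)) ^ c *
            (2 ^ c * (1 + (‖B (l + 1) ω‖₊ : ℝ≥0∞) ^ c)) ∂P := lintegral_mono hptw
      _ = ENNReal.ofReal ((L + 1) * (2 + d)) ^ c *
            (2 ^ c * (1 + ∫⁻ ω, (‖B (l + 1) ω‖₊ : ℝ≥0∞) ^ c ∂P)) := by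
          rw [lintegral_const_mul' _ _
              (ENNReal.rpow_lt_top_of_nonneg hc0 ENNReal.ofReal_ne_top).ne,
            lintegral_const_mul' _ _ h2top,
            lintegral_add_left measurable_const, lintegral_one, measure_univ]
      _ < ⊤ := by
          refine ENNReal.mul_lt_top
            (ENNReal.rpow_lt_top_of_nonneg hc0 ENNReal.ofReal_ne_top) ?_
          refine ENNReal.mul_lt_top h2top.lt_top ?_
          exact ENNReal.add_lt_top.2 ⟨ENNReal.one_lt_top, hBm⟩
  calc ∫⁻ ω, ENNReal.ofReal (CC N L B ω) ^ r ∂P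
      ≤ ∫⁻ ω, ∑ l ∈ Finset.range N, ENNReal.ofReal ((L + 1) * (AA B l ω + 1)) ^ c ∂P :=
        lintegral_mono hpt
    _ = ∑ l ∈ Finset.range N, ∫⁻ ω, ENNReal.ofReal ((L + 1) * (AA B l ω + 1)) ^ c ∂P :=
        lintegral_finset_sum' _ fun l _ =>
          ((ENNReal.continuous_rpow_const.measurable).comp (hmeasAA l)).aemeasurable
    _ < ⊤ := by
        refine ENNReal.sum_lt_top.2 fun l hl => ?_
        exact hterm l (Finset.mem_range.1 hl)

lemma TT_moment {mdim : ℕ} [MeasurableSpace Ω] (P : MeasureTheory.Measure Ω)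
    [MeasureTheory.IsProbabilityMeasure P]
    {N : ℕ} {q : ℝ} (hq : 0 < q) {u us : ℕ → Ω → Vec mdim}
    (hu : ∀ k < N, Measurable (u k)) (hus : ∀ k < N, Measurable (us k))
    (hqu : ∫⁻ ω, ∑ k ∈ Finset.range N, (‖u k ω‖₊ : ℝ≥0∞) ^ q ∂P < ∞)
    (hqus : ∫⁻ ω, ∑ k ∈ Finset.range N, (‖us k ω‖₊ : ℝ≥0∞) ^ q ∂P < ∞) :
    ∫⁻ ω, ENNReal.ofReal (TT N u us ω) ^ q ∂P < ∞ := by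
  have hq0 : (0:ℝ) ≤ q := hq.le
  have h2top : (2:ℝ≥0∞) ^ q ≠ ⊤ := (ENNReal.rpow_lt_top_of_nonneg hq0 (by norm_num)).ne
  have hNtop : ((N:ℝ≥0∞)) ^ q ≠ ⊤ :=
    (ENNReal.rpow_lt_top_of_nonneg hq0 (ENNReal.natCast_ne_top N)).ne
  have hpt : ∀ ω, ENNReal.ofReal (TT N u us ω) ^ q ≤
      (N : ℝ≥0∞) ^ q * (2 ^ q * ((∑ k ∈ Finset.range N, (‖u k ω‖₊ : ℝ≥0∞) ^ q) +
        ∑ k ∈ Finset.range N, (‖us k ω‖₊ : ℝ≥0∞) ^ q)) := by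
    intro ω
    have h1 : ENNReal.ofReal (TT N u us ω) =
        ∑ k ∈ Finset.range N, (‖u k ω - us k ω‖₊ : ℝ≥0∞) := by
      rw [TT, ENNReal.ofReal_sum_of_nonneg fun k _ => norm_nonneg _]
      exact Finset.sum_congr rfl fun k _ => ofReal_norm _
    rw [h1]
    refine le_trans (sum_rpow_le _ _ hq) ?_
    rw [Finset.card_range]
    refine mul_le_mul_right ?_ _
    have h2 : ∀ k, ((‖u k ω - us k ω‖₊ : ℝ≥0∞)) ^ q ≤
        2 ^ q * ((‖u k ω‖₊ : ℝ≥0∞) ^ q + (‖us k ω‖₊ : ℝ≥0∞) ^ q) := by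
      intro k
      have h3 : (‖u k ω - us k ω‖₊ : ℝ≥0∞) ≤ (‖u k ω‖₊ : ℝ≥0∞) + (‖us k ω‖₊ : ℝ≥0∞) := by
        exact_mod_cast nnnorm_sub_le _ _
      exact le_trans (ENNReal.rpow_le_rpow h3 hq0) (addpow _ _ hq0)
    calc ∑ k ∈ Finset.range N, (‖u k ω - us k ω‖₊ : ℝ≥0∞) ^ q
        ≤ ∑ k ∈ Finset.range N,
            2 ^ q * ((‖u k ω‖₊ : ℝ≥0∞) ^ q + (‖us k ω‖₊ : ℝ≥0∞) ^ q) :=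
          Finset.sum_le_sum fun k _ => h2 k
      _ = 2 ^ q * ((∑ k ∈ Finset.range N, (‖u k ω‖₊ : ℝ≥0∞) ^ q) +
            ∑ k ∈ Finset.range N, (‖us k ω‖₊ : ℝ≥0∞) ^ q) := by
          rw [← Finset.mul_sum, Finset.sum_add_distrib]
  have hmeasu : Measurable fun ω => ∑ k ∈ Finset.range N, (‖u k ω‖₊ : ℝ≥0∞) ^ q :=
    Finset.measurable_sum _ fun k hk =>
      (ENNReal.continuous_rpow_const.measurable).comp
        ((hu k (Finset.mem_range.1 hk)).nnnorm.coe_nnreal_ennreal)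
  calc ∫⁻ ω, ENNReal.ofReal (TT N u us ω) ^ q ∂P
      ≤ ∫⁻ ω, (N : ℝ≥0∞) ^ q * (2 ^ q *
          ((∑ k ∈ Finset.range N, (‖u k ω‖₊ : ℝ≥0∞) ^ q) +
            ∑ k ∈ Finset.range N, (‖us k ω‖₊ : ℝ≥0∞) ^ q)) ∂P := lintegral_mono hpt
    _ = (N : ℝ≥0∞) ^ q * (2 ^ q *
          ((∫⁻ ω, ∑ k ∈ Finset.range N, (‖u k ω‖₊ : ℝ≥0∞) ^ q ∂P) +
            ∫⁻ ω, ∑ k ∈ Finset.range N, (‖us k ω‖₊ : ℝ≥0∞) ^ q ∂P)) := by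
        rw [lintegral_const_mul' _ _ hNtop, lintegral_const_mul' _ _ h2top,
          lintegral_add_left hmeasu]
    _ < ⊤ := by
        refine ENNReal.mul_lt_top hNtop.lt_top ?_
        refine ENNReal.mul_lt_top h2top.lt_top ?_
        exact ENNReal.add_lt_top.2 ⟨hqu, hqus⟩

end DQAux

/-- Lemma 3.1. Under (H1)–(H3), the difference quotient of the perturbed
state converges to the variational process in `L²`, uniformly in `γ`. -/
theorem difference_quotient_converges_uniformly
    {n m d N : ℕ} (hN : 0 < N)
    {Ω : Type} [MeasurableSpace Ω] (P : Measure Ω) [IsProbabilityMeasure P]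
    (hPc : P.IsComplete)
    {Γ : Type} [MetricSpace Γ] [PolishSpace Γ] [LocallyCompactSpace Γ]
    (B : ℕ → Ω → Vec d) (hBmeas : ∀ k, Measurable (B k))
    (hBindep : iIndepFun (fun i : Fin N => B (i + 1)) P)
    (hBmom : ∀ k, 1 ≤ k → k ≤ N → ∀ r : ℝ, 2 ≤ r →
      ∫⁻ ω, (‖B k ω‖₊ : ℝ≥0∞) ^ r ∂P < ∞)
    (q : ℝ) (hq : 2 < q)
    (U : ℕ → Set (Vec m)) (hU : ∀ k < N, (U k).Nonempty ∧ Convex ℝ (U k))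
    (L : ℝ) (hL : 0 < L)
    (b : Γ → ℕ → Vec n × Vec m → Vec n) (σ : Γ → ℕ → Vec n × Vec m → Fin d → Vec n)
    (h1 : ∀ γ, H1 N L (b γ) (σ γ)) (h3 : H3bσ N b σ)
    (x0 : Vec n) (us u : ℕ → Ω → Vec m)
    (hus : IsAdmissible P B N q U us) (hu : IsAdmissible P B N q U u) :
    Tendsto
      (fun δ : ℝ => ⨆ γ : Γ,
        ∫⁻ ω, ∑ k ∈ Finset.range (N + 1),
          (‖δ⁻¹ • (stateSol (b γ) (σ γ) B x0 (fun k ω => us k ω + δ • (u k ω - us k ω)) k ω -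
              stateSol (b γ) (σ γ) B x0 us k ω) -
            varSol (b γ) (σ γ) B (stateSol (b γ) (σ γ) B x0 us) us u k ω‖₊ : ℝ≥0∞) ^ 2 ∂P)
      (nhdsWithin 0 (Set.Ioo (0 : ℝ) 1)) (nhds 0) := by
  classical
  obtain ⟨ψ, hmod, hψbd⟩ := h3
  have hq0 : (0:ℝ) < q := by linarith
  have hfil : ∀ k, k < N → noiseFiltration B k ≤ ‹MeasurableSpace Ω› := fun k _ =>
    iSup₂_le fun i _ => (hBmeas i).comap_le
  have humeas : ∀ k < N, Measurable (u k) := fun k hk =>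
    (hu.adapted k hk).mono (hfil k hk) le_rfl
  have husmeas : ∀ k < N, Measurable (us k) := fun k hk =>
    (hus.adapted k hk).mono (hfil k hk) le_rfl
  set em : ℝ := q / (q - 2) with hemdef
  have hqm2 : (0:ℝ) < q - 2 := by linarith
  have hem1 : 1 < em := by rw [hemdef]; exact (one_lt_div hqm2).2 (by linarith)
  have hem0 : (0:ℝ) < em := by linarith
  have hconj : Real.HolderConjugate em (q / 2) := by
    refine Real.holderConjugate_iff.mpr ⟨hem1, ?_⟩
    rw [hemdef]
    have hq0' : q ≠ 0 := by linarith
    have hq2' : q - 2 ≠ 0 := by linarith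
    rw [inv_div, inv_div, ← add_div, sub_add_cancel, div_self hq0']
  have hconj22 : Real.HolderConjugate (2:ℝ) 2 := Real.holderConjugate_iff.mpr ⟨one_lt_two, by norm_num⟩
  have hSmeas : Measurable (DQAux.SS N L B u us) := DQAux.meas_SS hBmeas humeas husmeas
  set F : ℝ → Ω → ℝ≥0∞ :=
    fun δ ω => ENNReal.ofReal (min (ψ (δ * DQAux.SS N L B u us ω)) (2 * L)) with hFdef
  set G : Ω → ℝ≥0∞ := fun ω => ENNReal.ofReal (DQAux.PhiR N L B ω) with hGdef
  set H : Ω → ℝ≥0∞ := fun ω => ENNReal.ofReal (DQAux.TT N u us ω) with hHdef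
  have hFmeas : ∀ δ : ℝ, Measurable (F δ) := fun δ =>
    ENNReal.measurable_ofReal.comp
      ((hmod.continuous.min continuous_const).measurable.comp (hSmeas.const_mul δ))
  have hGmeas : Measurable G := ENNReal.measurable_ofReal.comp (DQAux.meas_PhiR hBmeas)
  have hHmeas : Measurable H :=
    ENNReal.measurable_ofReal.comp (DQAux.meas_TT humeas husmeas)
  -- pointwise master bound
  have hmaster : ∀ γ : Γ, ∀ δ : ℝ, 0 < δ → ∀ ω : Ω,
      (∑ k ∈ Finset.range (N + 1),
        (‖δ⁻¹ • (stateSol (b γ) (σ γ) B x0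
              (fun k ω => us k ω + δ • (u k ω - us k ω)) k ω -
            stateSol (b γ) (σ γ) B x0 us k ω) -
          varSol (b γ) (σ γ) B (stateSol (b γ) (σ γ) B x0 us) us u k ω‖₊ : ℝ≥0∞) ^ 2)
        ≤ F δ ω ^ 2 * (G ω * H ω ^ 2) := by
    intro γ δ hδ ω
    have hkey := DQAux.key_pointwise hL hmod (h1 γ) (hψbd γ) B x0 us u hδ ω
    have hSnn : 0 ≤ DQAux.SS N L B u us ω := DQAux.SS_nonneg hL B u us ω
    have hTnn : 0 ≤ DQAux.TT N u us ω := DQAux.TT_nonneg N u us ω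
    have hψtnn : 0 ≤ min (ψ (δ * DQAux.SS N L B u us ω)) (2 * L) :=
      le_min (hmod.zero ▸ hmod.mono (mul_nonneg hδ.le hSnn)) (by linarith)
    have hsum : ∑ k ∈ Finset.range (N + 1),
        ‖δ⁻¹ • (stateSol (b γ) (σ γ) B x0
              (fun k ω => us k ω + δ • (u k ω - us k ω)) k ω -
            stateSol (b γ) (σ γ) B x0 us k ω) -
          varSol (b γ) (σ γ) B (stateSol (b γ) (σ γ) B x0 us) us u k ω‖ ^ 2 ≤
        min (ψ (δ * DQAux.SS N L B u us ω)) (2 * L) ^ 2 *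
          (DQAux.PhiR N L B ω * DQAux.TT N u us ω ^ 2) := by
      have h1' := Finset.sum_le_sum (f := fun k =>
          ‖δ⁻¹ • (stateSol (b γ) (σ γ) B x0
              (fun k ω => us k ω + δ • (u k ω - us k ω)) k ω -
            stateSol (b γ) (σ γ) B x0 us k ω) -
          varSol (b γ) (σ γ) B (stateSol (b γ) (σ γ) B x0 us) us u k ω‖ ^ 2)
        (g := fun k => (min (ψ (δ * DQAux.SS N L B u us ω)) (2 * L) *
          (DQAux.SS N L B u us ω * DQAux.QQ L B k ω)) ^ 2)
        (s := Finset.range (N + 1))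
        (fun k hk => pow_le_pow_left₀ (norm_nonneg _)
          ((hkey k (Nat.lt_succ_iff.1 (Finset.mem_range.1 hk))).2.2) 2)
      refine h1'.trans ?_
      have h2' : ∑ k ∈ Finset.range (N + 1),
          (min (ψ (δ * DQAux.SS N L B u us ω)) (2 * L) *
            (DQAux.SS N L B u us ω * DQAux.QQ L B k ω)) ^ 2 =
          min (ψ (δ * DQAux.SS N L B u us ω)) (2 * L) ^ 2 * DQAux.SS N L B u us ω ^ 2 *
            ∑ k ∈ Finset.range (N + 1), DQAux.QQ L B k ω ^ 2 := by
        rw [Finset.mul_sum]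
        exact Finset.sum_congr rfl fun k _ => by ring
      rw [h2']
      have hSle := DQAux.SS_le (N := N) hL B u us ω
      have hS2 : DQAux.SS N L B u us ω ^ 2 ≤
          ((1 + ∑ j ∈ Finset.range N, DQAux.QQ L B j ω) * DQAux.TT N u us ω) ^ 2 :=
        pow_le_pow_left₀ hSnn hSle 2
      have hQ2nn : (0:ℝ) ≤ ∑ k ∈ Finset.range (N + 1), DQAux.QQ L B k ω ^ 2 :=
        Finset.sum_nonneg fun _ _ => sq_nonneg _
      calc min (ψ (δ * DQAux.SS N L B u us ω)) (2 * L) ^ 2 * DQAux.SS N L B u us ω ^ 2 *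
            ∑ k ∈ Finset.range (N + 1), DQAux.QQ L B k ω ^ 2
          ≤ min (ψ (δ * DQAux.SS N L B u us ω)) (2 * L) ^ 2 *
              ((1 + ∑ j ∈ Finset.range N, DQAux.QQ L B j ω) * DQAux.TT N u us ω) ^ 2 *
              ∑ k ∈ Finset.range (N + 1), DQAux.QQ L B k ω ^ 2 :=
            mul_le_mul_of_nonneg_right
              (mul_le_mul_of_nonneg_left hS2 (sq_nonneg _)) hQ2nn
        _ = min (ψ (δ * DQAux.SS N L B u us ω)) (2 * L) ^ 2 *
              (DQAux.PhiR N L B ω * DQAux.TT N u us ω ^ 2) := by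
            simp only [DQAux.PhiR]; ring
    calc (∑ k ∈ Finset.range (N + 1),
        (‖δ⁻¹ • (stateSol (b γ) (σ γ) B x0
              (fun k ω => us k ω + δ • (u k ω - us k ω)) k ω -
            stateSol (b γ) (σ γ) B x0 us k ω) -
          varSol (b γ) (σ γ) B (stateSol (b γ) (σ γ) B x0 us) us u k ω‖₊ : ℝ≥0∞) ^ 2)
        = ENNReal.ofReal (∑ k ∈ Finset.range (N + 1),
            ‖δ⁻¹ • (stateSol (b γ) (σ γ) B x0
              (fun k ω => us k ω + δ • (u k ω - us k ω)) k ω -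
            stateSol (b γ) (σ γ) B x0 us k ω) -
          varSol (b γ) (σ γ) B (stateSol (b γ) (σ γ) B x0 us) us u k ω‖ ^ 2) := by
          rw [ENNReal.ofReal_sum_of_nonneg fun k _ => sq_nonneg _]
          exact Finset.sum_congr rfl fun k _ => by
            rw [ENNReal.ofReal_pow (norm_nonneg _), ofReal_norm, enorm_eq_nnnorm]
      _ ≤ ENNReal.ofReal (min (ψ (δ * DQAux.SS N L B u us ω)) (2 * L) ^ 2 *
            (DQAux.PhiR N L B ω * DQAux.TT N u us ω ^ 2)) :=
          ENNReal.ofReal_le_ofReal hsum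
      _ = F δ ω ^ 2 * (G ω * H ω ^ 2) := by
          rw [ENNReal.ofReal_mul (by positivity),
            ENNReal.ofReal_mul (DQAux.PhiR_nonneg B ω),
            ENNReal.ofReal_pow hψtnn, ENNReal.ofReal_pow hTnn]
  -- integrability of the fixed factors
  have hCCnn : ∀ ω : Ω, (0:ℝ) ≤ DQAux.CC N L B ω := fun ω =>
    le_trans zero_le_one (DQAux.one_le_CC hL B ω)
  have h2em0 : (0:ℝ) ≤ 2 * em := by linarith
  have hIG : ∫⁻ ω, G ω ^ (2 * em) ∂P < ∞ := by
    have hGle : ∀ ω : Ω, G ω ^ (2 * em) ≤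
        ENNReal.ofReal (((N:ℝ) + 1) ^ 3) ^ (2 * em) *
          ENNReal.ofReal (DQAux.CC N L B ω) ^ (8 * em) := by
      intro ω
      have h1' : G ω ≤ ENNReal.ofReal (((N:ℝ) + 1) ^ 3) *
          ENNReal.ofReal (DQAux.CC N L B ω) ^ (4:ℕ) := by
        rw [hGdef, ← ENNReal.ofReal_pow (hCCnn ω), ← ENNReal.ofReal_mul (by positivity)]
        exact ENNReal.ofReal_le_ofReal (DQAux.PhiR_le hL B ω)
      calc G ω ^ (2 * em) ≤ (ENNReal.ofReal (((N:ℝ) + 1) ^ 3) *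
            ENNReal.ofReal (DQAux.CC N L B ω) ^ (4:ℕ)) ^ (2 * em) :=
            ENNReal.rpow_le_rpow h1' h2em0
        _ = ENNReal.ofReal (((N:ℝ) + 1) ^ 3) ^ (2 * em) *
              ENNReal.ofReal (DQAux.CC N L B ω) ^ (8 * em) := by
            rw [ENNReal.mul_rpow_of_nonneg _ _ h2em0,
              ← ENNReal.rpow_natCast (ENNReal.ofReal (DQAux.CC N L B ω)) 4,
              ← ENNReal.rpow_mul]
            congr 1
            push_cast
            ring
    have hCCm : ∫⁻ ω, ENNReal.ofReal (DQAux.CC N L B ω) ^ (8 * em) ∂P < ∞ :=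
      DQAux.CC_moment P hN hL hBmeas hBmom (by nlinarith)
    calc ∫⁻ ω, G ω ^ (2 * em) ∂P
        ≤ ∫⁻ ω, ENNReal.ofReal (((N:ℝ) + 1) ^ 3) ^ (2 * em) *
            ENNReal.ofReal (DQAux.CC N L B ω) ^ (8 * em) ∂P := lintegral_mono hGle
      _ = ENNReal.ofReal (((N:ℝ) + 1) ^ 3) ^ (2 * em) *
            ∫⁻ ω, ENNReal.ofReal (DQAux.CC N L B ω) ^ (8 * em) ∂P :=
          lintegral_const_mul' _ _
            (ENNReal.rpow_lt_top_of_nonneg h2em0 ENNReal.ofReal_ne_top).ne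
      _ < ⊤ := ENNReal.mul_lt_top
          (ENNReal.rpow_lt_top_of_nonneg h2em0 ENNReal.ofReal_ne_top) hCCm
  have hIH : ∫⁻ ω, H ω ^ q ∂P < ∞ :=
    DQAux.TT_moment P hq0 humeas husmeas hu.lq_bound hus.lq_bound
  -- the Hölder chain
  have hchain : ∀ δ : ℝ,
      ∫⁻ ω, F δ ω ^ 2 * (G ω * H ω ^ 2) ∂P ≤
        ((∫⁻ ω, F δ ω ^ (4 * em) ∂P) ^ ((1:ℝ) / 2) *
          (∫⁻ ω, G ω ^ (2 * em) ∂P) ^ ((1:ℝ) / 2)) ^ ((1:ℝ) / em) *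
          (∫⁻ ω, H ω ^ q ∂P) ^ ((2:ℝ) / q) := by
    intro δ
    have hFGm : AEMeasurable (fun ω => F δ ω ^ (2:ℝ) * G ω) P :=
      ((ENNReal.continuous_rpow_const.measurable.comp (hFmeas δ)).mul hGmeas).aemeasurable
    have hH2m : AEMeasurable (fun ω => H ω ^ (2:ℝ)) P :=
      (ENNReal.continuous_rpow_const.measurable.comp hHmeas).aemeasurable
    have hstep1 := ENNReal.lintegral_mul_le_Lp_mul_Lq P hconj hFGm hH2m
    have hLHSeq : ∫⁻ ω, F δ ω ^ 2 * (G ω * H ω ^ 2) ∂P =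
        ∫⁻ ω, ((fun ω => F δ ω ^ (2:ℝ) * G ω) * fun ω => H ω ^ (2:ℝ)) ω ∂P := by
      refine lintegral_congr fun ω => ?_
      simp only [Pi.mul_apply]
      rw [← ENNReal.rpow_natCast (F δ ω) 2, ← ENNReal.rpow_natCast (H ω) 2,
        Nat.cast_ofNat]
      ring
    have hg2 : ∫⁻ ω, (H ω ^ (2:ℝ)) ^ (q / 2) ∂P = ∫⁻ ω, H ω ^ q ∂P := by
      refine lintegral_congr fun ω => ?_
      rw [← ENNReal.rpow_mul]
      congr 1
      field_simp
    have hf2 : ∫⁻ ω, (F δ ω ^ (2:ℝ) * G ω) ^ em ∂P =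
        ∫⁻ ω, F δ ω ^ (2 * em) * G ω ^ em ∂P := by
      refine lintegral_congr fun ω => ?_
      rw [ENNReal.mul_rpow_of_nonneg _ _ hem0.le, ← ENNReal.rpow_mul]
    have hstep2 := ENNReal.lintegral_mul_le_Lp_mul_Lq P hconj22
      (f := fun ω => F δ ω ^ (2 * em)) (g := fun ω => G ω ^ em)
      ((ENNReal.continuous_rpow_const.measurable.comp (hFmeas δ)).aemeasurable)
      ((ENNReal.continuous_rpow_const.measurable.comp hGmeas).aemeasurable)
    have hff : ∫⁻ ω, (F δ ω ^ (2 * em)) ^ (2:ℝ) ∂P = ∫⁻ ω, F δ ω ^ (4 * em) ∂P := by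
      refine lintegral_congr fun ω => ?_
      rw [← ENNReal.rpow_mul]
      congr 1
      ring
    have hgg : ∫⁻ ω, (G ω ^ em) ^ (2:ℝ) ∂P = ∫⁻ ω, G ω ^ (2 * em) ∂P := by
      refine lintegral_congr fun ω => ?_
      rw [← ENNReal.rpow_mul]
      congr 1
      ring
    have hmid : (∫⁻ ω, (F δ ω ^ (2:ℝ) * G ω) ^ em ∂P) ^ ((1:ℝ) / em) ≤
        ((∫⁻ ω, F δ ω ^ (4 * em) ∂P) ^ ((1:ℝ) / 2) *
          (∫⁻ ω, G ω ^ (2 * em) ∂P) ^ ((1:ℝ) / 2)) ^ ((1:ℝ) / em) := by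
      refine ENNReal.rpow_le_rpow ?_ (by positivity)
      rw [hf2]
      refine le_trans hstep2 ?_
      rw [hff, hgg]
    calc ∫⁻ ω, F δ ω ^ 2 * (G ω * H ω ^ 2) ∂P
        = ∫⁻ ω, ((fun ω => F δ ω ^ (2:ℝ) * G ω) * fun ω => H ω ^ (2:ℝ)) ω ∂P := hLHSeq
      _ ≤ (∫⁻ ω, (F δ ω ^ (2:ℝ) * G ω) ^ em ∂P) ^ ((1:ℝ) / em) *
            (∫⁻ ω, (H ω ^ (2:ℝ)) ^ (q / 2) ∂P) ^ ((1:ℝ) / (q / 2)) := hstep1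
      _ ≤ ((∫⁻ ω, F δ ω ^ (4 * em) ∂P) ^ ((1:ℝ) / 2) *
            (∫⁻ ω, G ω ^ (2 * em) ∂P) ^ ((1:ℝ) / 2)) ^ ((1:ℝ) / em) *
            (∫⁻ ω, (H ω ^ (2:ℝ)) ^ (q / 2) ∂P) ^ ((1:ℝ) / (q / 2)) :=
          mul_le_mul_left hmid _
      _ = ((∫⁻ ω, F δ ω ^ (4 * em) ∂P) ^ ((1:ℝ) / 2) *
            (∫⁻ ω, G ω ^ (2 * em) ∂P) ^ ((1:ℝ) / 2)) ^ ((1:ℝ) / em) *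
            (∫⁻ ω, H ω ^ q ∂P) ^ ((2:ℝ) / q) := by
          rw [hg2, one_div_div, one_div_div]
  -- DCT: the F-factor tends to 0
  have h4em : (0:ℝ) < 4 * em := by linarith
  have hI1 : Tendsto (fun δ : ℝ => ∫⁻ ω, F δ ω ^ (4 * em) ∂P)
      (nhdsWithin 0 (Set.Ioo (0:ℝ) 1)) (nhds 0) := by
    have hlim : ∀ ω : Ω, Tendsto (fun δ : ℝ => F δ ω ^ (4 * em))
        (nhdsWithin 0 (Set.Ioo (0:ℝ) 1)) (nhds 0) := by
      intro ω
      have t1 : Tendsto (fun δ : ℝ => δ * DQAux.SS N L B u us ω)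
          (nhdsWithin 0 (Set.Ioo (0:ℝ) 1)) (nhds 0) :=
        ((continuous_id.mul (continuous_const (y := DQAux.SS N L B u us ω))).tendsto' 0 0
          (zero_mul _)).mono_left nhdsWithin_le_nhds
      have t2 : Tendsto (fun x : ℝ => min (ψ x) (2 * L)) (nhds 0) (nhds 0) :=
        (hmod.continuous.min continuous_const).tendsto' 0 0
          (by rw [hmod.zero]; exact min_eq_left (by linarith))
      have t3 : Tendsto (fun x : ℝ => ENNReal.ofReal x) (nhds 0) (nhds 0) :=
        ENNReal.continuous_ofReal.tendsto' 0 0 ENNReal.ofReal_zero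
      have t4 : Tendsto (fun x : ℝ≥0∞ => x ^ (4 * em)) (nhds 0) (nhds 0) :=
        ENNReal.continuous_rpow_const.tendsto' 0 0 (ENNReal.zero_rpow_of_pos h4em)
      exact t4.comp (t3.comp (t2.comp t1))
    have hbd : ∀ δ : ℝ, ∀ ω : Ω, F δ ω ^ (4 * em) ≤ ENNReal.ofReal (2 * L) ^ (4 * em) :=
      fun δ ω => ENNReal.rpow_le_rpow
        (ENNReal.ofReal_le_ofReal (min_le_right _ _)) h4em.le
    have hdct := tendsto_lintegral_filter_of_dominated_convergence
      (μ := P) (l := nhdsWithin 0 (Set.Ioo (0:ℝ) 1))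
      (F := fun δ (ω : Ω) => F δ ω ^ (4 * em)) (f := fun _ => (0:ℝ≥0∞))
      (bound := fun _ : Ω => ENNReal.ofReal (2 * L) ^ (4 * em))
      (Filter.Eventually.of_forall fun δ =>
        ENNReal.continuous_rpow_const.measurable.comp (hFmeas δ))
      (Filter.Eventually.of_forall fun δ => MeasureTheory.ae_of_all P (hbd δ))
      (by rw [lintegral_const, measure_univ, mul_one]
          exact (ENNReal.rpow_lt_top_of_nonneg h4em.le ENNReal.ofReal_ne_top).ne)
      (MeasureTheory.ae_of_all P hlim)
    simpa using hdct
  -- the dominating bound tends to 0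
  have hIGne : (∫⁻ ω, G ω ^ (2 * em) ∂P) ^ ((1:ℝ) / 2) ≠ ⊤ :=
    (ENNReal.rpow_lt_top_of_nonneg (by norm_num) hIG.ne).ne
  have hIHne : (∫⁻ ω, H ω ^ q ∂P) ^ ((2:ℝ) / q) ≠ ⊤ :=
    (ENNReal.rpow_lt_top_of_nonneg (by positivity) hIH.ne).ne
  have hbound0 : Tendsto (fun δ : ℝ =>
      ((∫⁻ ω, F δ ω ^ (4 * em) ∂P) ^ ((1:ℝ) / 2) *
        (∫⁻ ω, G ω ^ (2 * em) ∂P) ^ ((1:ℝ) / 2)) ^ ((1:ℝ) / em) *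
        (∫⁻ ω, H ω ^ q ∂P) ^ ((2:ℝ) / q))
      (nhdsWithin 0 (Set.Ioo (0:ℝ) 1)) (nhds 0) := by
    have b1 : Tendsto (fun δ : ℝ => (∫⁻ ω, F δ ω ^ (4 * em) ∂P) ^ ((1:ℝ) / 2))
        (nhdsWithin 0 (Set.Ioo (0:ℝ) 1)) (nhds 0) :=
      ((ENNReal.continuous_rpow_const (y := (1:ℝ)/2)).tendsto' 0 0
        (ENNReal.zero_rpow_of_pos (by norm_num))).comp hI1
    have b2 := ENNReal.Tendsto.mul_const b1 (Or.inr hIGne)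
    rw [zero_mul] at b2
    have b3 : Tendsto (fun δ : ℝ =>
        ((∫⁻ ω, F δ ω ^ (4 * em) ∂P) ^ ((1:ℝ) / 2) *
          (∫⁻ ω, G ω ^ (2 * em) ∂P) ^ ((1:ℝ) / 2)) ^ ((1:ℝ) / em))
        (nhdsWithin 0 (Set.Ioo (0:ℝ) 1)) (nhds 0) :=
      ((ENNReal.continuous_rpow_const (y := (1:ℝ)/em)).tendsto' 0 0
        (ENNReal.zero_rpow_of_pos (by positivity))).comp b2
    have b4 := ENNReal.Tendsto.mul_const b3 (Or.inr hIHne)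
    rw [zero_mul] at b4
    exact b4
  -- squeeze
  refine tendsto_of_tendsto_of_tendsto_of_le_of_le' tendsto_const_nhds hbound0
    (Filter.Eventually.of_forall fun δ => zero_le) ?_
  filter_upwards [eventually_mem_nhdsWithin] with δ hδ
  refine iSup_le fun γ => ?_
  exact le_trans (lintegral_mono (hmaster γ δ hδ.1)) (hchain δ)


end
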